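/- Let H = ([n],[m],E) be a bipartite graph and p a vector of positive reals. If there exists a cylinder set A_1,...,A_n in I^m that conforms with H, is exclusive with respect to H (i.e., μ(A_i ∩ A_j) = 0 whenever i ≠ j share a common neighbor in H), and satisfies μ(A_i) = p_i for all i, then p is not in the exterior of H; that is, for every ε ∈ (0,1), every cylinder set conforming with H with measure vector (1−ε)p has union of measure strictly less than 1. -/

import Mathlib

open MeasureTheory
open scoped ENNReal

/-- The uniform probability measure on the unit cube `[0,1]^m`, viewed as a measure
on `Fin m → ℝ`. -/
noncomputable def cubeMeasure (m : ℕ) : Measure (Fin m → ℝ) :=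
  Measure.pi fun _ => volume.restrict (Set.Icc 0 1)

/-- `A` is a cylinder depending only on the coordinates in `S`. -/
def DependsOnlyOn {m : ℕ} (A : Set (Fin m → ℝ)) (S : Set (Fin m)) : Prop :=
  ∀ x y : Fin m → ℝ, (∀ j ∈ S, x j = y j) → (x ∈ A ↔ y ∈ A)

/-- A cylinder set conforms with the bigraph given by edge relation `E`. -/
def Conforms {n m : ℕ} (E : Fin n → Fin m → Prop) (A : Fin n → Set (Fin m → ℝ)) : Prop :=
  (∀ i, MeasurableSet (A i)) ∧ ∀ i, DependsOnlyOn (A i) {j | E i j}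

instance : IsProbabilityMeasure (volume.restrict (Set.Icc (0:ℝ) 1)) :=
  ⟨by rw [Measure.restrict_apply_univ, Real.volume_Icc]; norm_num⟩

instance cubeMeasure.instIsProbabilityMeasure (M : ℕ) :
    IsProbabilityMeasure (cubeMeasure M) := by
  unfold cubeMeasure; infer_instance

theorem DependsOnlyOn.mono {m : ℕ} {A : Set (Fin m → ℝ)} {S T : Set (Fin m)}
    (h : DependsOnlyOn A S) (hST : S ⊆ T) : DependsOnlyOn A T :=
  fun x y hxy => h x y fun j hj => hxy j (hST hj)

theorem DependsOnlyOn.compl {m : ℕ} {A : Set (Fin m → ℝ)} {S : Set (Fin m)}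
    (h : DependsOnlyOn A S) : DependsOnlyOn Aᶜ S :=
  fun x y hxy => not_congr (h x y hxy)

theorem dependsOnlyOn_biInter {m N : ℕ} {f : Fin N → Set (Fin m → ℝ)} {S : Set (Fin m)}
    (W : Finset (Fin N)) (h : ∀ j ∈ W, DependsOnlyOn (f j) S) :
    DependsOnlyOn (⋂ j ∈ W, f j) S := by
  intro x y hxy
  simp only [Set.mem_iInter]
  exact ⟨fun hx j hj => (h j hj x y hxy).1 (hx j hj),
    fun hy j hj => (h j hj x y hxy).2 (hy j hj)⟩

/-- Key independence lemma: two measurable sets depending on disjoint sets of coordinates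
are independent under the cube measure. -/
theorem cube_inter_eq_mul {M : ℕ} {X Y : Set (Fin M → ℝ)} {S : Set (Fin M)}
    (hXm : MeasurableSet X) (hYm : MeasurableSet Y)
    (hX : DependsOnlyOn X S) (hY : DependsOnlyOn Y Sᶜ) :
    cubeMeasure M (X ∩ Y) = cubeMeasure M X * cubeMeasure M Y := by
  classical
  set e := MeasurableEquiv.piEquivPiSubtypeProd (fun _ : Fin M => ℝ) (· ∈ S) with he
  have mp := measurePreserving_piEquivPiSubtypeProd
    (fun _ : Fin M => volume.restrict (Set.Icc (0:ℝ) 1)) (· ∈ S)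
  set X1 : Set (∀ _ : {j : Fin M // j ∈ S}, ℝ) :=
    (fun u => e.symm (u, fun _ => 0)) ⁻¹' X with hX1
  set Y2 : Set (∀ _ : {j : Fin M // ¬ j ∈ S}, ℝ) :=
    (fun v => e.symm ((fun _ => 0), v)) ⁻¹' Y with hY2
  have mX1 : MeasurableSet X1 :=
    (e.symm.measurable.comp (measurable_id.prodMk measurable_const)) hXm
  have mY2 : MeasurableSet Y2 :=
    (e.symm.measurable.comp (measurable_const.prodMk measurable_id)) hYm
  have hesymm : ∀ (u : ∀ _ : {j : Fin M // j ∈ S}, ℝ)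
      (v : ∀ _ : {j : Fin M // ¬ j ∈ S}, ℝ) (j : Fin M),
      e.symm (u, v) j = if h : j ∈ S then u ⟨j, h⟩ else v ⟨j, h⟩ := fun _ _ _ => rfl
  have keyX : X = e ⁻¹' (X1 ×ˢ Set.univ) := by
    ext x
    simp only [Set.mem_preimage, Set.mem_prod, Set.mem_univ, and_true, hX1]
    exact hX x _ fun j hj => by
      rw [hesymm, dif_pos hj]; rfl
  have keyY : Y = e ⁻¹' (Set.univ ×ˢ Y2) := by
    ext x
    simp only [Set.mem_preimage, Set.mem_prod, Set.mem_univ, true_and, hY2]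
    exact hY x _ fun j hj => by
      rw [hesymm, dif_neg hj]; rfl
  have hXY : X ∩ Y = e ⁻¹' (X1 ×ˢ Y2) := by
    rw [keyX, keyY, ← Set.preimage_inter, Set.prod_inter_prod, Set.inter_univ, Set.univ_inter]
  unfold cubeMeasure
  rw [hXY, keyX, keyY, mp.measure_preimage (mX1.prod mY2).nullMeasurableSet,
    mp.measure_preimage (mX1.prod MeasurableSet.univ).nullMeasurableSet,
    mp.measure_preimage (MeasurableSet.univ.prod mY2).nullMeasurableSet,
    Measure.prod_prod, Measure.prod_prod, Measure.prod_prod]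
  simp only [measure_univ, mul_one, one_mul]

/-- Restriction to the first `m` coordinates is measure preserving. -/
theorem cube_marginal {m n : ℕ} {Z : Set (Fin m → ℝ)} (hZ : MeasurableSet Z) :
    cubeMeasure (m + n) ((fun x (j : Fin m) => x (Fin.castAdd n j)) ⁻¹' Z)
      = cubeMeasure m Z := by
  have mp1 := (measurePreserving_piCongrLeft
    (fun _ : Fin (m + n) => volume.restrict (Set.Icc (0:ℝ) 1)) finSumFinEquiv).symm
    (MeasurableEquiv.piCongrLeft (fun _ => ℝ) finSumFinEquiv)
  have mp2 := measurePreserving_sumPiEquivProdPi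
    (fun _ : Fin m ⊕ Fin n => volume.restrict (Set.Icc (0:ℝ) 1))
  have mp := mp2.comp mp1
  have hset : ((fun x (j : Fin m) => x (Fin.castAdd n j)) ⁻¹' Z)
      = (⇑(MeasurableEquiv.sumPiEquivProdPi (fun _ : Fin m ⊕ Fin n => ℝ)) ∘
        ⇑(MeasurableEquiv.piCongrLeft (fun _ => ℝ) finSumFinEquiv).symm) ⁻¹'
        (Z ×ˢ Set.univ) := by
    ext x
    simp only [Set.mem_preimage, Function.comp_apply, Set.mem_prod, Set.mem_univ, and_true]
    have : (MeasurableEquiv.sumPiEquivProdPi (fun _ : Fin m ⊕ Fin n => ℝ)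
        ((MeasurableEquiv.piCongrLeft (fun _ => ℝ) finSumFinEquiv).symm x)).1
        = fun j : Fin m => x (Fin.castAdd n j) := by
      funext j
      show ((MeasurableEquiv.piCongrLeft (fun _ => ℝ) finSumFinEquiv).symm x) (Sum.inl j) = _
      show ((Equiv.piCongrLeft (fun _ => ℝ) finSumFinEquiv).symm x) (Sum.inl j) = _
      rw [Equiv.piCongrLeft_symm_apply, finSumFinEquiv_apply_left]
    rw [this]
  unfold cubeMeasure
  rw [hset, mp.measure_preimage (hZ.prod MeasurableSet.univ).nullMeasurableSet,
    Measure.prod_prod, measure_univ, mul_one]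

/-- Measure of a one-coordinate event. -/
theorem cube_eval {M : ℕ} (k : Fin M) {s : Set ℝ} (hs : MeasurableSet s) :
    cubeMeasure M ((fun x => x k) ⁻¹' s) = volume.restrict (Set.Icc 0 1) s := by
  classical
  have hset : ((fun x : Fin M → ℝ => x k) ⁻¹' s)
      = Set.pi Set.univ (Function.update (fun _ => Set.univ) k s) := by
    ext x
    simp only [Set.mem_preimage, Set.mem_univ_pi, Function.update_apply]
    constructor
    · intro hx j
      by_cases hj : j = k
      · subst hj; simp [hx]
      · simp [hj]
    · intro hx
      have := hx k
      simpa using this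
  rw [hset]
  unfold cubeMeasure
  rw [Measure.pi_pi]
  have : ∀ j : Fin M, (volume.restrict (Set.Icc (0:ℝ) 1))
      (Function.update (fun _ => Set.univ) k s j)
      = Function.update (fun _ : Fin M => (volume.restrict (Set.Icc (0:ℝ) 1)) Set.univ) k
        ((volume.restrict (Set.Icc (0:ℝ) 1)) s) j := fun j =>
    Function.apply_update (fun _ z => (volume.restrict (Set.Icc (0:ℝ) 1)) z) _ k s j
  simp only [this]
  rw [Finset.prod_update_of_mem (Finset.mem_univ k)]
  simp [measure_univ]

/-- Abstract recursion: removing one index from an intersection of complements. -/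
theorem cube_recur {N M : ℕ} {D : Fin N → Set (Fin M → ℝ)} (hD : ∀ i, MeasurableSet (D i))
    {i : Fin N} {W : Finset (Fin N)} (hiW : i ∉ W) :
    cubeMeasure M (⋂ j ∈ W, (D j)ᶜ)
      = cubeMeasure M (⋂ j ∈ insert i W, (D j)ᶜ)
        + cubeMeasure M (D i ∩ ⋂ j ∈ W, (D j)ᶜ) := by
  have hXm : MeasurableSet (⋂ j ∈ W, (D j)ᶜ) :=
    Finset.measurableSet_biInter W fun j _ => (hD j).compl
  have hins : (⋂ j ∈ insert i W, (D j)ᶜ) = (D i)ᶜ ∩ ⋂ j ∈ W, (D j)ᶜ := by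
    rw [Finset.set_biInter_insert]
  rw [hins, ← measure_union
    (Disjoint.mono Set.inter_subset_left Set.inter_subset_left disjoint_compl_left)
    ((hD i).inter hXm)]
  congr 1
  rw [← Set.union_inter_distrib_right, Set.compl_union_self, Set.univ_inter]

theorem stmt5 {n m : ℕ} (E : Fin n → Fin m → Prop) (p : Fin n → ℝ)
    (hp : ∀ i, 0 < p i)
    (A : Fin n → Set (Fin m → ℝ)) (hA : Conforms E A)
    (hmeasure : ∀ i, cubeMeasure m (A i) = ENNReal.ofReal (p i))
    (hexc : ∀ i j, i ≠ j → (∃ k, E i k ∧ E j k) → cubeMeasure m (A i ∩ A j) = 0) :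
    ∀ ε ∈ Set.Ioo (0:ℝ) 1,
      ∀ B : Fin n → Set (Fin m → ℝ), Conforms E B →
        (∀ i, cubeMeasure m (B i) = ENNReal.ofReal ((1 - ε) * p i)) →
        cubeMeasure m (⋃ i, B i) < 1 := by
  classical
  obtain ⟨hAmeas, hAdep⟩ := hA
  intro ε hε B hB hBmeasure
  obtain ⟨hBmeas, hBdep⟩ := hB
  obtain ⟨hε0, hε1⟩ := hε
  set t : ℝ := 1 - ε with ht
  have ht0 : 0 < t := by simp only [ht]; linarith
  have ht1 : t < 1 := by simp only [ht]; linarith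
  set μ : Measure (Fin m → ℝ) := cubeMeasure m with hμ
  set μ' : Measure (Fin (m + n) → ℝ) := cubeMeasure (m + n) with hμ'
  have hπmeas : Measurable (fun (x : Fin (m+n) → ℝ) (j : Fin m) => x (Fin.castAdd n j)) :=
    measurable_pi_lambda _ fun j => measurable_pi_apply _
  set A' : Fin n → Set (Fin (m + n) → ℝ) := fun i =>
    ((fun x (j : Fin m) => x (Fin.castAdd n j)) ⁻¹' A i) ∩ {x | x (Fin.natAdd m i) ≤ t}
    with hA'
  have hA'meas : ∀ i, MeasurableSet (A' i) := fun i =>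
    (hπmeas (hAmeas i)).inter (measurableSet_le (measurable_pi_apply _) measurable_const)
  set q : Fin n → ℝ≥0∞ := fun i => ENNReal.ofReal ((1 - ε) * p i) with hq
  have hqfin : ∀ i, q i ≠ ⊤ := fun i => ENNReal.ofReal_ne_top
  -- the coordinate sets on which A' depends
  set S' : Fin n → Set (Fin (m + n)) := fun i =>
    {z | (∃ k, E i k ∧ z = Fin.castAdd n k) ∨ z = Fin.natAdd m i} with hS'
  have hA'dep : ∀ i, DependsOnlyOn (A' i) (S' i) := by
    intro i x y hxy
    have h1 : ∀ k, E i k → x (Fin.castAdd n k) = y (Fin.castAdd n k) :=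
      fun k hk => hxy _ (Or.inl ⟨k, hk, rfl⟩)
    have h2 : x (Fin.natAdd m i) = y (Fin.natAdd m i) := hxy _ (Or.inr rfl)
    simp only [hA', Set.mem_inter_iff, Set.mem_preimage, Set.mem_setOf_eq]
    exact and_congr (hAdep i _ _ fun j hj => h1 j hj) (by rw [h2])
  have hS'disj : ∀ i j, i ≠ j → ¬(∃ k, E i k ∧ E j k) → S' j ⊆ (S' i)ᶜ := by
    intro i j hij hadj z hz hz'
    rcases hz with ⟨k, hk, rfl⟩ | rfl
    · rcases hz' with ⟨k', hk', heq⟩ | heq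
      · have hkk : k = k' := Fin.castAdd_injective _ _ heq
        exact hadj ⟨k, hkk ▸ hk', hk⟩
      · have := congrArg Fin.val heq
        simp only [Fin.coe_castAdd, Fin.coe_natAdd] at this
        omega
    · rcases hz' with ⟨k', _, heq⟩ | heq
      · have := congrArg Fin.val heq
        simp only [Fin.coe_castAdd, Fin.coe_natAdd] at this
        omega
      · have := congrArg Fin.val heq
        simp only [Fin.coe_natAdd] at this
        exact hij (Fin.ext (by omega)).symm
  -- measure of A' i
  have hA'measure : ∀ i, μ' (A' i) = q i := by
    intro i
    have hd1 : DependsOnlyOn ((fun x (j : Fin m) => x (Fin.castAdd n j)) ⁻¹' A i)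
        {z : Fin (m + n) | (z : ℕ) < m} := by
      intro x y hxy
      exact hAdep i _ _ fun j _ => hxy _ (by simp [Fin.is_lt])
    have hd2 : DependsOnlyOn {x : Fin (m+n) → ℝ | x (Fin.natAdd m i) ≤ t}
        {z : Fin (m + n) | (z : ℕ) < m}ᶜ := by
      intro x y hxy
      have : x (Fin.natAdd m i) = y (Fin.natAdd m i) := hxy _ (by simp)
      simp only [Set.mem_setOf_eq, this]
    have := cube_inter_eq_mul (hπmeas (hAmeas i))
      (measurableSet_le (measurable_pi_apply _) measurable_const) hd1 hd2
    rw [hA']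
    simp only []
    rw [this, cube_marginal (hAmeas i), hmeasure i]
    have hIic : {x : Fin (m+n) → ℝ | x (Fin.natAdd m i) ≤ t}
        = (fun x : Fin (m+n) → ℝ => x (Fin.natAdd m i)) ⁻¹' Set.Iic t := rfl
    rw [hIic, cube_eval _ measurableSet_Iic, Measure.restrict_apply measurableSet_Iic]
    have : Set.Iic t ∩ Set.Icc 0 1 = Set.Icc (0:ℝ) t := by
      ext z
      simp only [Set.mem_inter_iff, Set.mem_Iic, Set.mem_Icc]
      constructor
      · rintro ⟨h1, h2, _⟩; exact ⟨h2, h1⟩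
      · rintro ⟨h1, h2⟩; exact ⟨h2, h1, by linarith⟩
    rw [this, Real.volume_Icc, sub_zero, ← ENNReal.ofReal_mul (hp i).le]
    show ENNReal.ofReal (p i * t) = ENNReal.ofReal ((1 - ε) * p i)
    rw [ht]; ring_nf
  -- exclusivity for A'
  have hA'null : ∀ i j, i ≠ j → (∃ k, E i k ∧ E j k) → μ' (A' i ∩ A' j) = 0 := by
    intro i j hij hadj
    have hsub : A' i ∩ A' j
        ⊆ (fun x (j : Fin m) => x (Fin.castAdd n j)) ⁻¹' (A i ∩ A j) := by
      rintro x ⟨⟨h1, _⟩, ⟨h2, _⟩⟩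
      exact ⟨h1, h2⟩
    have hle := measure_mono (μ := μ') hsub
    rw [hμ', cube_marginal ((hAmeas i).inter (hAmeas j)), ← hμ, hexc i j hij hadj] at hle
    exact le_antisymm hle zero_le
  -- the two families of intersections
  set P : Finset (Fin n) → ℝ≥0∞ := fun W => μ (⋂ j ∈ W, (B j)ᶜ) with hPdef
  set H : Finset (Fin n) → ℝ≥0∞ := fun W => μ' (⋂ j ∈ W, (A' j)ᶜ) with hHdef
  have hPle : ∀ W, P W ≤ 1 := fun W => prob_le_one
  have hHle : ∀ W, H W ≤ 1 := fun W => prob_le_one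
  have hPfin : ∀ W, P W ≠ ⊤ := fun W => ((hPle W).trans_lt ENNReal.one_lt_top).ne
  have hHfin : ∀ W, H W ≠ ⊤ := fun W => ((hHle W).trans_lt ENNReal.one_lt_top).ne
  -- positivity of H
  have hHpos : ∀ V : Finset (Fin n), H V ≠ 0 := by
    intro V
    have hsub : (Set.univ.pi fun z : Fin (m + n) =>
        if z ∈ V.image (Fin.natAdd m) then Set.Ioi t else Set.univ)
        ⊆ ⋂ j ∈ V, (A' j)ᶜ := by
      intro x hx
      simp only [Set.mem_iInter]
      intro j hj
      have hxz := hx (Fin.natAdd m j) (Set.mem_univ _)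
      have hmemim : Fin.natAdd m j ∈ V.image (Fin.natAdd m) := Finset.mem_image_of_mem _ hj
      simp only [hmemim, if_true] at hxz
      intro hmem
      exact absurd (show x (Fin.natAdd m j) ≤ t from hmem.2) (not_le.mpr (show t < x (Fin.natAdd m j) from hxz))
    have hbox : μ' (Set.univ.pi fun z : Fin (m + n) =>
        if z ∈ V.image (Fin.natAdd m) then Set.Ioi t else Set.univ) ≠ 0 := by
      rw [hμ']
      unfold cubeMeasure
      rw [Measure.pi_pi]
      rw [Finset.prod_ne_zero_iff]
      intro z _
      by_cases hz : z ∈ V.image (Fin.natAdd m)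
      · rw [if_pos hz, Measure.restrict_apply measurableSet_Ioi]
        have : Set.Ioi t ∩ Set.Icc 0 1 = Set.Ioc t 1 := by
          ext w
          simp only [Set.mem_inter_iff, Set.mem_Ioi, Set.mem_Icc, Set.mem_Ioc]
          constructor
          · rintro ⟨h1, _, h3⟩; exact ⟨h1, h3⟩
          · rintro ⟨h1, h2⟩; exact ⟨h1, by linarith, h2⟩
        rw [this, Real.volume_Ioc]
        simp only [ne_eq, ENNReal.ofReal_eq_zero, not_le]
        linarith
      · rw [if_neg hz, measure_univ]
        exact one_ne_zero
    intro h0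
    exact hbox (le_antisymm (le_trans (measure_mono hsub) h0.le) zero_le)
  -- recursion for H
  have hHrec : ∀ (i : Fin n) (V' : Finset (Fin n)), i ∉ V' →
      H V' = H (insert i V')
        + q i * H (V'.filter fun j => ¬ ∃ k, E i k ∧ E j k) := by
    intro i V' hiV'
    set C := V'.filter fun j => ¬ ∃ k, E i k ∧ E j k with hC
    have hCV' : C ⊆ V' := Finset.filter_subset _ _
    have base := cube_recur hA'meas hiV' (M := m + n)
    have hstep : μ' (A' i ∩ ⋂ j ∈ V', (A' j)ᶜ) = μ' (A' i ∩ ⋂ j ∈ C, (A' j)ᶜ) := by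
      apply le_antisymm
      · apply measure_mono
        apply Set.inter_subset_inter_right
        intro x hx
        simp only [Set.mem_iInter] at hx ⊢
        exact fun j hj => hx j (hCV' hj)
      · have hsub : A' i ∩ ⋂ j ∈ C, (A' j)ᶜ
            ⊆ (A' i ∩ ⋂ j ∈ V', (A' j)ᶜ) ∪ ⋃ j ∈ ((V' \ C : Finset (Fin n)) : Set (Fin n)), (A' i ∩ A' j) := by
          rintro x ⟨hxi, hxC⟩
          by_cases hall : ∀ j ∈ V', x ∈ (A' j)ᶜ
          · exact Or.inl ⟨hxi, Set.mem_iInter₂.mpr hall⟩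
          · push_neg at hall
            obtain ⟨j, hjV, hjA⟩ := hall
            refine Or.inr (Set.mem_biUnion (Finset.mem_coe.mpr
              (Finset.mem_sdiff.mpr ⟨hjV, fun hjC => ?_⟩)) ⟨hxi, not_not.mp hjA⟩)
            exact hjA (Set.mem_iInter₂.mp hxC j hjC)
        have hnull : μ' (⋃ j ∈ ((V' \ C : Finset (Fin n)) : Set (Fin n)), (A' i ∩ A' j)) = 0 := by
          rw [measure_biUnion_null_iff (Finset.countable_toSet _)]
          intro j hj
          rw [Finset.mem_coe, Finset.mem_sdiff, hC, Finset.mem_filter, not_and, not_not] at hj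
          have hij : i ≠ j := fun h => hiV' (h ▸ hj.1)
          exact hA'null i j hij (hj.2 hj.1)
        calc μ' (A' i ∩ ⋂ j ∈ C, (A' j)ᶜ)
            ≤ μ' (A' i ∩ ⋂ j ∈ V', (A' j)ᶜ)
              + μ' (⋃ j ∈ ((V' \ C : Finset (Fin n)) : Set (Fin n)), (A' i ∩ A' j)) :=
              (measure_mono hsub).trans (measure_union_le _ _)
          _ = μ' (A' i ∩ ⋂ j ∈ V', (A' j)ᶜ) := by rw [hnull, add_zero]
    have hindep : μ' (A' i ∩ ⋂ j ∈ C, (A' j)ᶜ) = q i * H C := by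
      have hYdep : DependsOnlyOn (⋂ j ∈ C, (A' j)ᶜ) (S' i)ᶜ := by
        apply dependsOnlyOn_biInter
        intro j hj
        rw [hC, Finset.mem_filter] at hj
        have hij : i ≠ j := fun h => hiV' (h ▸ hj.1)
        exact ((hA'dep j).mono (hS'disj i j hij hj.2)).compl
      rw [hμ', cube_inter_eq_mul (hA'meas i)
        (Finset.measurableSet_biInter C fun j _ => (hA'meas j).compl) (hA'dep i) hYdep,
        ← hμ', hA'measure i, hHdef]
    rw [hHdef]
    simp only []
    rw [base, hstep, hindep, hHdef]
  -- recursion for P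
  have hPrec : ∀ (i : Fin n) (V' : Finset (Fin n)), i ∉ V' →
      P V' ≤ P (insert i V')
        + q i * P (V'.filter fun j => ¬ ∃ k, E i k ∧ E j k) := by
    intro i V' hiV'
    set C := V'.filter fun j => ¬ ∃ k, E i k ∧ E j k with hC
    have hCV' : C ⊆ V' := Finset.filter_subset _ _
    have base := cube_recur hBmeas hiV' (M := m)
    have hstep : μ (B i ∩ ⋂ j ∈ V', (B j)ᶜ) ≤ μ (B i ∩ ⋂ j ∈ C, (B j)ᶜ) := by
      apply measure_mono
      apply Set.inter_subset_inter_right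
      intro x hx
      simp only [Set.mem_iInter] at hx ⊢
      exact fun j hj => hx j (hCV' hj)
    have hindep : μ (B i ∩ ⋂ j ∈ C, (B j)ᶜ) = q i * P C := by
      have hYdep : DependsOnlyOn (⋂ j ∈ C, (B j)ᶜ) {k | E i k}ᶜ := by
        apply dependsOnlyOn_biInter
        intro j hj
        rw [hC, Finset.mem_filter] at hj
        refine ((hBdep j).mono ?_).compl
        intro k hk hk'
        exact hj.2 ⟨k, hk', hk⟩
      rw [hμ, cube_inter_eq_mul (hBmeas i)
        (Finset.measurableSet_biInter C fun j _ => (hBmeas j).compl) (hBdep i) hYdep,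
        ← hμ, hBmeasure i, hPdef]
    rw [hPdef]
    simp only []
    rw [base]
    exact add_le_add le_rfl (hstep.trans (le_of_eq hindep))
  -- the main induction
  have main : ∀ (K : ℕ) (V : Finset (Fin n)), V.card ≤ K →
      ∀ U ⊆ V, H V * P U ≤ P V * H U := by
    intro K
    induction K with
    | zero =>
      intro V hV U hU
      have hVe : V = ∅ := Finset.card_eq_zero.mp (Nat.le_zero.mp hV)
      subst hVe
      have hUe : U = ∅ := Finset.subset_empty.mp hU
      subst hUe
      rw [mul_comm]
    | succ K ih =>
      intro V hV U hUV
      by_cases hUV' : U = V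
      · subst hUV'; rw [mul_comm]
      have hssub : U ⊂ V := lt_of_le_of_ne hUV hUV'
      obtain ⟨i, hiV, hiU⟩ := Finset.exists_of_ssubset hssub
      set V' := V.erase i with hV'def
      have hiV' : i ∉ V' := Finset.notMem_erase i V
      have hins : insert i V' = V := Finset.insert_erase hiV
      have hUsubV' : U ⊆ V' := fun x hx =>
        Finset.mem_erase.mpr ⟨fun h => hiU (h ▸ hx), hUV hx⟩
      have hcard : V'.card ≤ K := by
        rw [hV'def, Finset.card_erase_of_mem hiV]
        omega
      set C := V'.filter fun j => ¬ ∃ k, E i k ∧ E j k with hC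
      have hCsub : C ⊆ V' := Finset.filter_subset _ _
      have hHr := hHrec i V' hiV'
      have hPr := hPrec i V' hiV'
      rw [hins] at hHr hPr
      have IH1 : H V' * P C ≤ P V' * H C := ih V' hcard C hCsub
      have IH2 : H V' * P U ≤ P V' * H U := ih V' hcard U hUsubV'
      have F1 : H V * P V' ≤ P V * H V' := by
        have h1 : H V' * P V' ≤ P V * H V' + q i * (H C * P V') := by
          calc H V' * P V' ≤ H V' * (P V + q i * P C) := mul_le_mul_right hPr _
            _ = H V' * P V + q i * (H V' * P C) := by ring
            _ ≤ H V' * P V + q i * (P V' * H C) :=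
                add_le_add le_rfl (mul_le_mul_right IH1 _)
            _ = P V * H V' + q i * (H C * P V') := by ring
        have h2 : H V' * P V' = H V * P V' + q i * (H C * P V') := by rw [hHr]; ring
        rw [h2] at h1
        exact (ENNReal.add_le_add_iff_right
          (ENNReal.mul_ne_top (hqfin i) (ENNReal.mul_ne_top (hHfin C) (hPfin V')))).mp h1
      have h3 : (H V * P U) * H V' ≤ (P V * H U) * H V' := by
        calc (H V * P U) * H V' = H V * (H V' * P U) := by ring
          _ ≤ H V * (P V' * H U) := mul_le_mul_right IH2 _
          _ = (H V * P V') * H U := by ring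
          _ ≤ (P V * H V') * H U := mul_le_mul_left F1 _
          _ = (P V * H U) * H V' := by ring
      exact (ENNReal.mul_le_mul_iff_left (hHpos V') (hHfin V')).mp h3
  -- conclusion
  have final := main n Finset.univ (by simp) ∅ (Finset.empty_subset _)
  have hPe : P ∅ = 1 := by
    rw [hPdef]
    simp only [Finset.notMem_empty, Set.iInter_of_empty, Set.iInter_univ]
    exact measure_univ
  have hHe : H ∅ = 1 := by
    rw [hHdef]
    simp only [Finset.notMem_empty, Set.iInter_of_empty, Set.iInter_univ]
    exact measure_univ
  rw [hPe, hHe, mul_one, mul_one] at final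
  have hPuniv : P Finset.univ ≠ 0 := fun h0 => hHpos Finset.univ (le_antisymm
    (h0 ▸ final) zero_le)
  have hcompl : μ (⋃ i, B i) + P Finset.univ = 1 := by
    have hi : (⋂ j ∈ (Finset.univ : Finset (Fin n)), (B j)ᶜ) = (⋃ i, B i)ᶜ := by
      simp [Set.compl_iUnion]
    show μ (⋃ i, B i) + μ (⋂ j ∈ (Finset.univ : Finset (Fin n)), (B j)ᶜ) = 1
    rw [hi, measure_add_measure_compl (MeasurableSet.iUnion fun i => hBmeas i)]
    exact measure_univ
  calc μ (⋃ i, B i) < μ (⋃ i, B i) + P Finset.univ :=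
        ENNReal.lt_add_right
          ((measure_mono (Set.subset_univ _)).trans_lt
            (measure_univ (μ := μ) ▸ ENNReal.one_lt_top)).ne hPuniv
    _ = 1 := hcompl
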